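/- Progressiveness makes H₊ a guarded monad; in particular the three closure rules hold: (trv) for every f : X → H₊ Y, the map x ↦ (H₊ inl)(f x) obtained by post-composing the evolution of f x with some ∘ Sum.inl : Y → Option (Y ⊕ Z) is progressive in Z; (sum) if f : X → H₊ (Y ⊕ Z) and g : X' → H₊ (Y ⊕ Z) are both progressive in Z, then the copairing [f,g] : X ⊕ X' → H₊ (Y ⊕ Z) is progressive in Z; (cmp) if f : X → H₊ (Y ⊕ Z) is progressive in Z, g : Y → H₊ (V ⊕ W) is progressive in W, and h : Z → H₊ (V ⊕ W) is arbitrary, then ([g,h])^† ∘ f : X → H₊ (V ⊕ W) is progressive in W. -/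

import Mathlib

open scoped ENNReal NNReal
open Classical

universe u v w

/-- Raw trajectories: a duration in `ℝ≥0∞` and a partial evolution `ℝ≥0 → Option X`. -/
abbrev Traj (X : Type u) := ℝ≥0∞ × (ℝ≥0 → Option X)

/-- The flattening condition: if the duration is finite, the evolution is constant
from the duration onwards.  Membership in `H₀M X` means exactly `Flat`. -/
def Flat {X : Type u} (p : Traj X) : Prop :=
  ∀ t : ℝ≥0, p.1 ≤ (t : ℝ≥0∞) → p.2 t = p.2 p.1.toNNReal

/-- The unit of `H₀M`. -/
def eta {X : Type u} (x : X) : Traj X := (0, fun _ => some x)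

/-- The Kleisli lifting `f^†` of the monad `H₀M`. -/
noncomputable def kl {X : Type u} {Y : Type v} (f : X → Traj Y) (p : Traj X) : Traj Y :=
  if p.1 = ⊤ then (p.1, fun t => (p.2 t).bind fun x' => (f x').2 0)
  else
    match p.2 p.1.toNNReal with
    | none => (p.1, fun t => (p.2 t).bind fun x' => (f x').2 0)
    | some x =>
        (p.1 + (f x).1,
          fun t =>
            if (t : ℝ≥0∞) < p.1 then (p.2 t).bind fun x' => (f x').2 0
            else (f x).2 (t - p.1.toNNReal))

/-- Membership in `H₊ X ⊆ H₀M X`: the evolution is not everywhere `none`, and it is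
defined at every time instant strictly below the duration. -/
def memHp {X : Type u} (p : Traj X) : Prop :=
  p.2 ≠ (fun _ => none) ∧ ∀ t : ℝ≥0, (t : ℝ≥0∞) < p.1 → p.2 t ≠ none

/-- Membership in `H X ⊆ H₀M X`: either the evolution is total, or the duration is `∞`
and the domain of the evolution is downward closed. -/
def memH {X : Type u} (p : Traj X) : Prop :=
  (∀ t, p.2 t ≠ none) ∨
    (p.1 = ⊤ ∧ ∀ s t : ℝ≥0, s ≤ t → p.2 t ≠ none → p.2 s ≠ none)

/-- The approximation order `⊑` on `H₀M X`. -/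
def TrajLE {X : Type u} (p q : Traj X) : Prop :=
  p.1 ≤ q.1 ∧ (∀ t, p.2 t ≠ none → q.2 t = p.2 t) ∧
    (p.1 ≠ ⊤ → p.2 p.1.toNNReal ≠ none → p.1 = q.1)

/-- Join of an ω-chain in `H₀M X`: the duration is the supremum of the durations, and
the evolution at `t` is the common value `(c i).2 t` whenever it is `≠ none` for some
`i`, and `none` otherwise. -/
noncomputable def chainJoin {X : Type u} (c : ℕ → Traj X) : Traj X :=
  (⨆ i, (c i).1,
    fun t => if h : ∃ i, (c i).2 t ≠ none then (c h.choose).2 t else none)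

/-- `d⋆ = sup { s < d ∣ e is defined on [0, s) }`. -/
noncomputable def dstar {X : Type u} (p : Traj X) : ℝ≥0∞ :=
  sSup {s : ℝ≥0∞ | s < p.1 ∧ ∀ t : ℝ≥0, (t : ℝ≥0∞) < s → p.2 t ≠ none}

/-- The retraction `ρ : H₀M X → H₀M X` onto `H X`. -/
noncomputable def rho {X : Type u} (p : Traj X) : Traj X :=
  ((if ∀ t, p.2 t ≠ none then p.1 else ⊤),
    fun t =>
      if (t : ℝ≥0∞) ≤ dstar p then p.2 t
      else if ∀ t', p.2 t' ≠ none then p.2 (dstar p).toNNReal else none)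

/-- The iterates `f⁽ⁿ⁾` of `f : X → H₀M (Y ⊕ X)`. -/
noncomputable def iter {X Y : Type u} (f : X → Traj (Y ⊕ X)) : ℕ → X → Traj Y
  | 0, _ => (0, fun _ => none)
  | n + 1, x => kl (Sum.elim eta (iter f n)) (f x)

/-- The least-fixpoint iteration `f^‡ x = ⊔ₙ f⁽ⁿ⁾ x`. -/
noncomputable def iterStar {X Y : Type u} (f : X → Traj (Y ⊕ X)) (x : X) : Traj Y :=
  chainJoin fun n => iter f n x

/-- `f : X → H₊ (A ⊕ B)` is progressive in `B` (guarded in the second summand). -/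
def Prog {X : Type u} {A B : Type v} (f : X → Traj (A ⊕ B)) : Prop :=
  ∀ x, ∃ a : A, (f x).2 0 = some (Sum.inl a)


lemma ev0_ne_none {X : Type u} {p : Traj X} (hf : Flat p) (hp : memHp p) :
    p.2 0 ≠ none := by
  rcases lt_or_ge (0 : ℝ≥0∞) p.1 with h | h
  · exact hp.2 0 (by simpa using h)
  · have hd : p.1 = 0 := le_antisymm (by simpa using h) (zero_le)
    intro h0
    apply hp.1
    funext t
    have := hf t (by simp [hd])
    rw [this, hd]
    simpa [hd] using h0

/-- Progressiveness makes `H₊` a guarded monad: the closure rules (trv), (sum) and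
(cmp) hold. -/
theorem Hplus_guardedness_rules :
    -- (trv)
    (∀ (X Y Z : Type u) (f : X → Traj Y), (∀ x, Flat (f x) ∧ memHp (f x)) →
      Prog (fun x => (((f x).1, fun t => ((f x).2 t).map Sum.inl) : Traj (Y ⊕ Z)))) ∧
    -- (sum)
    (∀ (X X' Y Z : Type u) (f : X → Traj (Y ⊕ Z)) (g : X' → Traj (Y ⊕ Z)),
      (∀ x, Flat (f x) ∧ memHp (f x)) → (∀ x', Flat (g x') ∧ memHp (g x')) →
      Prog f → Prog g → Prog (Sum.elim f g)) ∧
    -- (cmp)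
    (∀ (X Y Z V W : Type u) (f : X → Traj (Y ⊕ Z)) (g : Y → Traj (V ⊕ W))
        (h : Z → Traj (V ⊕ W)),
      (∀ x, Flat (f x) ∧ memHp (f x)) → (∀ y, Flat (g y) ∧ memHp (g y)) →
      (∀ z, Flat (h z) ∧ memHp (h z)) →
      Prog f → Prog g → Prog (fun x => kl (Sum.elim g h) (f x))) := by
  refine ⟨?_, ?_, ?_⟩
  · intro X Y Z f hf x
    obtain ⟨y, hy⟩ := Option.ne_none_iff_exists'.mp (ev0_ne_none (hf x).1 (hf x).2)
    exact ⟨y, by simp [hy]⟩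
  · intro X X' Y Z f g _ _ pf pg x
    cases x with
    | inl x => exact pf x
    | inr x' => exact pg x'
  · intro X Y Z V W f g h hf hg hh pf pg x
    obtain ⟨a, ha⟩ := pf x
    obtain ⟨v, hv⟩ := pg a
    refine ⟨v, ?_⟩
    unfold kl
    by_cases htop : (f x).1 = ⊤
    · simp [htop, ha, hv]
    · simp only [htop, if_false]
      rcases heq : (f x).2 (f x).1.toNNReal with _ | x0
      · simp [ha, hv]
      · simp only
        by_cases hpos : ((0:ℝ≥0) : ℝ≥0∞) < (f x).1
        · simp [hpos, ha, hv]
          intro h0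
          rw [h0] at hpos
          simp at hpos
        · have hd : (f x).1 = 0 := le_antisymm (by simpa using hpos) (zero_le)
          have : x0 = Sum.inl a := by
            rw [hd] at heq; simp at heq; rw [ha] at heq; exact (Option.some_inj.mp heq).symm
          simp [hpos, this, hd, hv]
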